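/- Let G = G[X,Y] be a connected bipartite graph with bipartition (X,Y), |X| = |Y| = n (so G has 2n vertices), and m edges, where t ≥ 1 and n ≥ 2t. If ρ_D(G) ≤ m − n² + (t+6)n − (t² + 4), then m ≥ n² − tn + t². -/

import Mathlib

open SimpleGraph Finset

open Matrix

open Matrix in
lemma rayleigh_le_of_max_eig {n : Type*} [Fintype n] [DecidableEq n] {A : Matrix n n ℝ}
    (hA : A.IsHermitian) {ρ : ℝ}
    (hρ : ∀ μ : ℝ, Module.End.HasEigenvalue (Matrix.toLin' A) μ → μ ≤ ρ)
    (x : n → ℝ) : x ⬝ᵥ (A *ᵥ x) ≤ ρ * (x ⬝ᵥ x) := by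
  have hev : ∀ i, hA.eigenvalues i ≤ ρ := by
    intro i
    apply hρ
    refine Module.End.hasEigenvalue_of_hasEigenvector
      (x := (⇑(hA.eigenvectorBasis i) : n → ℝ)) ⟨?_, ?_⟩
    · rw [Module.End.mem_eigenspace_iff]
      show Matrix.toLin' A (⇑(hA.eigenvectorBasis i)) = _
      rw [Matrix.toLin'_apply, hA.mulVec_eigenvectorBasis]
    · have h0 := hA.eigenvectorBasis.orthonormal.ne_zero i
      intro h
      apply h0
      ext j
      exact congrFun h j
  set U : Matrix n n ℝ := (hA.eigenvectorUnitary : Matrix n n ℝ) with hU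
  set y : n → ℝ := star U *ᵥ x with hy
  have hsU : Uᵀ = star U := by
    ext i j
    simp [Matrix.star_eq_conjTranspose, Matrix.conjTranspose_apply]
  have hdiag : (RCLike.ofReal ∘ hA.eigenvalues : n → ℝ) = hA.eigenvalues := by
    ext i; simp
  have hlhs : x ⬝ᵥ (A *ᵥ x) = ∑ i, hA.eigenvalues i * (y i * y i) := by
    conv_lhs => rw [hA.spectral_theorem, hdiag, Unitary.conjStarAlgAut_apply]
    rw [← Matrix.mulVec_mulVec, ← Matrix.mulVec_mulVec, Matrix.dotProduct_mulVec]
    have hxU : x ᵥ* U = y := by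
      rw [hy, ← Matrix.mulVec_transpose, hsU]
    rw [hxU]
    simp [dotProduct, Matrix.mulVec_diagonal, mul_comm, mul_left_comm]
    rfl
  have hrhs : x ⬝ᵥ x = ∑ i, y i * y i := by
    have h1 : U *ᵥ y = x := by
      rw [hy, Matrix.mulVec_mulVec, (Matrix.mem_unitaryGroup_iff).mp hA.eigenvectorUnitary.2,
        Matrix.one_mulVec]
    calc x ⬝ᵥ x = x ⬝ᵥ (U *ᵥ y) := by rw [h1]
      _ = (x ᵥ* U) ⬝ᵥ y := by rw [Matrix.dotProduct_mulVec]
      _ = y ⬝ᵥ y := by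
          rw [hy, ← Matrix.mulVec_transpose, hsU]
      _ = ∑ i, y i * y i := rfl
  rw [hlhs, hrhs, Finset.mul_sum]
  apply Finset.sum_le_sum
  intro i _
  exact mul_le_mul_of_nonneg_right (hev i) (mul_self_nonneg _)


/-- The transmission of a vertex: sum of distances to all other vertices. -/
noncomputable def transmission {V : Type*} [Fintype V] (G : SimpleGraph V) (u : V) : ℕ :=
  ∑ v, G.dist u v

/-- The transmission σ(G): sum of distances over all unordered pairs. -/
noncomputable def transmissionOf {V : Type*} [Fintype V] (G : SimpleGraph V) : ℝ :=
  (1 / 2) * ∑ u, ∑ v, (G.dist u v : ℝ)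

/-- The distance signless Laplacian matrix Q_D(G) = Tr(G) + 𝒟(G). -/
noncomputable def distSignlessLaplacian {V : Type*} [Fintype V] [DecidableEq V]
    (G : SimpleGraph V) : Matrix V V ℝ :=
  fun u v => (if u = v then (transmission G u : ℝ) else 0) + (G.dist u v : ℝ)

/-- `ρ` is the distance signless Laplacian spectral radius of `G`,
i.e. the largest eigenvalue of `Q_D(G)`. -/
noncomputable def IsDistSLSpectralRadius {V : Type*} [Fintype V] [DecidableEq V]
    (G : SimpleGraph V) (ρ : ℝ) : Prop :=
  IsGreatest {μ : ℝ | Module.End.HasEigenvalue (Matrix.toLin' (distSignlessLaplacian G)) μ} ρ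

/-- Join of two graphs. -/
def joinGraph {α β : Type*} (G : SimpleGraph α) (H : SimpleGraph β) : SimpleGraph (α ⊕ β) :=
  SimpleGraph.fromRel (fun x y =>
    match x, y with
    | Sum.inl a, Sum.inl b => G.Adj a b
    | Sum.inr a, Sum.inr b => H.Adj a b
    | Sum.inl _, Sum.inr _ => True
    | Sum.inr _, Sum.inl _ => False)

/-- The graph H_{t,n-t}. -/
def HGraph (n t : ℕ) : SimpleGraph (Fin n ⊕ Fin n) :=
  SimpleGraph.fromRel (fun x y =>
    match x, y with
    | Sum.inl i, Sum.inr j => (j : ℕ) < n - t ∨ (i : ℕ) < t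
    | _, _ => False)

/-- Hamilton-connected. -/
def IsHamiltonianConnected {V : Type*} [DecidableEq V] (G : SimpleGraph V) : Prop :=
  ∀ u v : V, u ≠ v → ∃ p : G.Walk u v, p.IsHamiltonian

/-- Traceable from every vertex. -/
def TraceableFromEveryVertex {V : Type*} [DecidableEq V] (G : SimpleGraph V) : Prop :=
  ∀ u : V, ∃ v : V, ∃ p : G.Walk u v, p.IsHamiltonian

/-- K_{n-1} + e : complete graph on n-1 vertices with a pendant edge. -/
def KPlusPendant (n : ℕ) : SimpleGraph (Fin (n - 1) ⊕ Fin 1) :=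
  SimpleGraph.fromRel (fun x y =>
    match x, y with
    | Sum.inl a, Sum.inl b => a ≠ b
    | Sum.inl a, Sum.inr _ => (a : ℕ) = 0
    | _, _ => False)

/-- If ρ_D(G) ≤ m - n² + (t+6)n - (t²+4) for a connected balanced bipartite graph,
then m ≥ n² - tn + t². -/
theorem stmt_3 {V : Type*} [Fintype V] [DecidableEq V] (G : SimpleGraph V) [DecidableRel G.Adj]
    (hconn : G.Connected)
    (n t : ℕ) (ht : 1 ≤ t) (hnt : 2 * t ≤ n)
    (X Y : Finset V) (hX : X.card = n) (hY : Y.card = n)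
    (hdisj : Disjoint X Y) (hcover : X ∪ Y = Finset.univ)
    (hbip : ∀ u v : V, G.Adj u v → (u ∈ X ∧ v ∈ Y) ∨ (u ∈ Y ∧ v ∈ X))
    (ρ : ℝ) (hρ : IsDistSLSpectralRadius G ρ)
    (hle : ρ ≤ (G.edgeFinset.card : ℝ) - (n : ℝ) ^ 2 + ((t : ℝ) + 6) * n - ((t : ℝ) ^ 2 + 4)) :
    (n : ℝ) ^ 2 - (t : ℝ) * n + (t : ℝ) ^ 2 ≤ (G.edgeFinset.card : ℝ) := by
  set m : ℕ := G.edgeFinset.card with hm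
  -- cardinality
  have hN : Fintype.card V = 2 * n := by
    have h1 : (X ∪ Y).card = X.card + Y.card := Finset.card_union_of_disjoint hdisj
    rw [hcover, Finset.card_univ, hX, hY] at h1
    omega
  -- hermitian
  have hherm : (distSignlessLaplacian G).IsHermitian := by
    unfold Matrix.IsHermitian
    ext u v
    simp only [Matrix.conjTranspose_apply, distSignlessLaplacian, star_trivial]
    by_cases h : u = v
    · subst h; rfl
    · simp [h, Ne.symm h, SimpleGraph.dist_comm]
  have hray := rayleigh_le_of_max_eig hherm (fun μ hμ => hρ.2 hμ) (fun _ => 1)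
  -- compute quadratic form
  have hlhs : ((fun _ => (1:ℝ)) ⬝ᵥ (distSignlessLaplacian G *ᵥ fun _ => (1:ℝ)))
      = 2 * ∑ u, ∑ v, (G.dist u v : ℝ) := by
    simp only [dotProduct, Matrix.mulVec, distSignlessLaplacian, transmission,
      mul_one, one_mul, Finset.sum_add_distrib, Finset.sum_ite_eq, Finset.mem_univ, if_true]
    push_cast
    ring
  have hrhs : ((fun _ : V => (1:ℝ)) ⬝ᵥ (fun _ => (1:ℝ))) = (2 * n : ℝ) := by
    simp [dotProduct, hN]
  rw [hlhs, hrhs] at hray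
  -- lower bound on distances
  have hptwise : ∀ u v : V, ((if u = v then 0 else 2) : ℝ) - (if G.Adj u v then 1 else 0)
      ≤ (G.dist u v : ℝ) := by
    intro u v
    by_cases h : u = v
    · simp [h]
    · by_cases ha : G.Adj u v
      · have : G.dist u v = 1 := SimpleGraph.dist_eq_one_iff_adj.mpr ha
        simp only [h, ha, this, if_false, if_true, Nat.cast_one]
        norm_num
      · have h1 : 0 < G.dist u v := hconn.pos_dist_of_ne h
        have h2 : G.dist u v ≠ 1 := fun hc => ha (SimpleGraph.dist_eq_one_iff_adj.mp hc)
        have h3 : 2 ≤ G.dist u v := by omega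
        have : (2 : ℝ) ≤ (G.dist u v : ℝ) := by exact_mod_cast h3
        simp only [h, ha, if_false]
        linarith
  have hsum1 : ∀ u : V, (∑ v, (if G.Adj u v then (1:ℝ) else 0)) = (G.degree u : ℝ) := by
    intro u
    rw [Finset.sum_boole, SimpleGraph.degree, SimpleGraph.neighborFinset_eq_filter]
  have hsum2 : (∑ u, (G.degree u : ℝ)) = 2 * m := by
    rw [← Nat.cast_sum]
    rw_mod_cast [SimpleGraph.sum_degrees_eq_twice_card_edges]
  have hsum3 : ∀ u : V, (∑ v, ((if u = v then 0 else 2) : ℝ)) = 2 * (2 * n) - 2 := by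
    intro u
    have hpt : ∀ v : V, ((if u = v then (0:ℝ) else 2)) = 2 - (if u = v then 2 else 0) := by
      intro v; by_cases h : u = v <;> simp [h]
    rw [Finset.sum_congr rfl fun v _ => hpt v, Finset.sum_sub_distrib, Finset.sum_const,
      Finset.sum_ite_eq, Finset.card_univ, hN]
    simp
    push_cast
    ring
  have hlow : 2 * (2 * (n:ℝ)) * (2 * n - 1) - 2 * m ≤ ∑ u, ∑ v, (G.dist u v : ℝ) := by
    have : ∑ u, ∑ v, (((if u = v then 0 else 2) : ℝ) - (if G.Adj u v then 1 else 0))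
        ≤ ∑ u, ∑ v, (G.dist u v : ℝ) :=
      Finset.sum_le_sum fun u _ => Finset.sum_le_sum fun v _ => hptwise u v
    calc 2 * (2 * (n:ℝ)) * (2 * n - 1) - 2 * m
        = ∑ u : V, ((2 * (2 * (n:ℝ)) - 2) - (G.degree u : ℝ)) := by
          rw [Finset.sum_sub_distrib, Finset.sum_const, hsum2, Finset.card_univ, hN]
          push_cast
          ring
      _ = ∑ u, ∑ v, (((if u = v then 0 else 2) : ℝ) - (if G.Adj u v then 1 else 0)) := by
          apply Finset.sum_congr rfl
          intro u _
          rw [Finset.sum_sub_distrib, hsum1, hsum3]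
      _ ≤ _ := this
  -- conclude
  by_contra hcon
  push_neg at hcon
  have hmM : (m : ℝ) + 1 ≤ (n:ℝ)^2 - t*n + t^2 := by
    have htn : (t:ℝ) * n ≤ (n:ℝ)^2 := by
      have : (t:ℝ) ≤ n := by exact_mod_cast le_trans (by omega) hnt
      nlinarith [Nat.cast_nonneg (α := ℝ) n]
    have htn2 : t * n ≤ n^2 + t^2 := by
      have hle' : t ≤ n := by omega
      calc t * n ≤ n * n := Nat.mul_le_mul_right n hle'
        _ ≤ n^2 + t^2 := by rw [pow_two]; omega
    have h1 : (m:ℝ) < ((n^2 + t^2 - t*n : ℕ) : ℝ) := by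
      rw [Nat.cast_sub htn2]
      push_cast
      linarith
    have h2 : m + 1 ≤ n^2 + t^2 - t*n := by exact_mod_cast h1
    have h3 := (Nat.cast_le (α := ℝ)).mpr h2
    rw [Nat.cast_sub htn2] at h3
    push_cast at h3
    linarith
  have hn1 : (1:ℝ) ≤ n := by exact_mod_cast le_trans (by omega) hnt
  have ht1 : (1:ℝ) ≤ t := by exact_mod_cast ht
  have hnt' : 2 * (t:ℝ) ≤ n := by exact_mod_cast hnt
  nlinarith [hray, hlow, hle, hmM, mul_le_mul_of_nonneg_left hle (by linarith : (0:ℝ) ≤ (n:ℝ))]
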